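/- In the transductive online game on threshold functions presented in dyadic order, at every dyadic level the adversary can force a mistake: formally, for the class H_N = {h_1,...,h_{N-1}} on domain {x_1,...,x_{N-1}} with h_i(x_j) = 1 iff j ≤ i and N = 2^k, if the instances are presented in the dyadic order x_{N/2}, x_{N/4}, x_{3N/4}, x_{N/8}, ..., then the adversary can force k mistakes while keeping all chosen labels H_N-realizable. -/

import Mathlib

open scoped Classical

/-- Number of mistakes made by learner strategy `A` in the transductive online game of
length `n`, when the adversary presents the sequence `x` and labels according to `h`. -/
noncomputable def mistakes {X Y : Type*} {n : ℕ} (A : (Fin n → X) → List Y → Y)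
    (x : Fin n → X) (h : X → Y) : ℕ :=
  (Finset.univ.filter (fun t : Fin n =>
    A x (List.ofFn (fun i : Fin t.1 => h (x ⟨i.1, i.2.trans t.2⟩))) ≠ h (x t))).card

/-- The dyadic enumeration of `{1, …, N-1}` for `N = 2^k`: position `t` (0-indexed) holds
`(2j+1)·N/2^{i+1}` where `t+1 = 2^i + j` with `0 ≤ j < 2^i`; i.e. the sequence
`N/2, N/4, 3N/4, N/8, 3N/8, 5N/8, 7N/8, …`. -/
def dyadicSeq (k : ℕ) (t : Fin (2 ^ k - 1)) : ℕ :=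
  (2 * ((t.1 + 1) - 2 ^ (Nat.log 2 (t.1 + 1))) + 1) * 2 ^ (k - Nat.log 2 (t.1 + 1) - 1)

namespace DyadicLB

/-- `xval k t` is `dyadicSeq k t` as a function of a bare natural number. -/
def xval (k t : ℕ) : ℕ :=
  (2 * ((t + 1) - 2 ^ (Nat.log 2 (t + 1))) + 1) * 2 ^ (k - Nat.log 2 (t + 1) - 1)

lemma dyadicSeq_eq (k : ℕ) (t : Fin (2 ^ k - 1)) : dyadicSeq k t = xval k t.1 := rfl

variable (k : ℕ) (A : (Fin (2 ^ k - 1) → ℕ) → List Bool → Bool)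

/-- The adversary's label at the active point of level `j+1`, when the current
lower end of the search interval is `l`: the negation of the learner's prediction. -/
noncomputable def bbit (l j : ℕ) : Bool :=
  ! A (dyadicSeq k) (List.ofFn (fun t : Fin (2 ^ j - 1 + l / 2 ^ (k - j)) =>
      decide (xval k t.1 ≤ l)))

/-- Lower end of the adversary's search interval after `j` levels. -/
noncomputable def lo : ℕ → ℕ
  | 0 => 0
  | j + 1 => lo j + (if bbit k A (lo j) j then 2 ^ (k - 1 - j) else 0)

/-- The position (index in the dyadic order) of the active point of level `j+1`. -/
noncomputable def tj (j : ℕ) : ℕ := 2 ^ j - 1 + lo k A j / 2 ^ (k - j)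

lemma lo_succ (j : ℕ) : lo k A (j + 1) =
    lo k A j + (if bbit k A (lo k A j) j then 2 ^ (k - 1 - j) else 0) := by
  simp [lo]

lemma lo_dvd_le : ∀ j, j ≤ k → 2 ^ (k - j) ∣ lo k A j ∧ lo k A j + 2 ^ (k - j) ≤ 2 ^ k := by
  intro j
  induction j with
  | zero => intro _; simp [lo]
  | succ j ih =>
    intro hj
    obtain ⟨hd, hl⟩ := ih (Nat.le_of_succ_le hj)
    have hpow : 2 ^ (k - j) = 2 * 2 ^ (k - (j + 1)) := by
      rw [← pow_succ']; congr 1; omega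
    have hkj : (2:ℕ) ^ (k - 1 - j) = 2 ^ (k - (j + 1)) := by congr 1; omega
    rw [lo_succ]
    constructor
    · refine Nat.dvd_add (dvd_trans ⟨2, by rw [hpow]; ring⟩ hd) ?_
      split
      · rw [hkj]
      · exact dvd_zero _
    · split <;> omega

lemma lo_nested : ∀ a b, a ≤ b → b ≤ k →
    lo k A a ≤ lo k A b ∧ lo k A b + 2 ^ (k - b) ≤ lo k A a + 2 ^ (k - a) := by
  intro a b hab
  induction b with
  | zero =>
    intro _
    have ha : a = 0 := by omega
    subst ha; exact ⟨le_rfl, le_rfl⟩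
  | succ b ih =>
    intro hbk
    rcases Nat.lt_or_ge a (b + 1) with h | h
    · have hab' : a ≤ b := by omega
      obtain ⟨h1, h2⟩ := ih hab' (by omega)
      have hpow : 2 ^ (k - b) = 2 * 2 ^ (k - (b + 1)) := by
        rw [← pow_succ']; congr 1; omega
      have hkj : (2:ℕ) ^ (k - 1 - b) = 2 ^ (k - (b + 1)) := by congr 1; omega
      rw [lo_succ]
      split <;> omega
    · have : a = b + 1 := by omega
      subst this; exact ⟨le_rfl, le_rfl⟩

lemma mj_lt (j : ℕ) (hj : j ≤ k) : lo k A j / 2 ^ (k - j) < 2 ^ j := by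
  obtain ⟨hd, hl⟩ := lo_dvd_le k A j hj
  have hq := Nat.div_mul_cancel hd
  have hpos : 0 < 2 ^ (k - j) := Nat.pow_pos (by norm_num)
  have h2k : 2 ^ j * 2 ^ (k - j) = 2 ^ k := by rw [← pow_add]; congr 1; omega
  by_contra hcon
  push_neg at hcon
  have : 2 ^ j * 2 ^ (k - j) ≤ (lo k A j / 2 ^ (k - j)) * 2 ^ (k - j) :=
    Nat.mul_le_mul_right _ hcon
  omega

lemma prefix_agree (j : ℕ) (hj : j < k) (t : ℕ) (ht : t < tj k A j) :
    decide (xval k t ≤ lo k A j) = decide (xval k t ≤ lo k A k) := by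
  obtain ⟨hd, hl⟩ := lo_dvd_le k A j (le_of_lt hj)
  have httj : tj k A j = 2 ^ j - 1 + lo k A j / 2 ^ (k - j) := rfl
  set L := lo k A j with hL
  set mj := L / 2 ^ (k - j) with hmj
  have hq : mj * 2 ^ (k - j) = L := Nat.div_mul_cancel hd
  have hmjlt : mj < 2 ^ j := mj_lt k A j (le_of_lt hj)
  have h2j : (0:ℕ) < 2 ^ j := Nat.pow_pos (by norm_num)
  set l := Nat.log 2 (t + 1) with hldef
  have h1 : 2 ^ l ≤ t + 1 := Nat.pow_log_le_self 2 (Nat.succ_ne_zero t)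
  have h2 : t + 1 < 2 ^ (l + 1) := Nat.lt_pow_succ_log_self (by norm_num) _
  have hlj : l ≤ j := by
    by_contra hcon
    push_neg at hcon
    have hc1 : 2 ^ (j + 1) ≤ 2 ^ l := Nat.pow_le_pow_right (by norm_num) hcon
    have h2j1 : (2:ℕ) ^ (j + 1) = 2 * 2 ^ j := by rw [pow_succ']
    omega
  have hLlek : L ≤ lo k A k := (lo_nested k A j k (le_of_lt hj) le_rfl).1
  have hknest : lo k A k + 1 ≤ L + 2 ^ (k - j) := by
    have h := (lo_nested k A j k (le_of_lt hj) le_rfl).2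
    simpa using h
  have hxval : xval k t = (2 * ((t + 1) - 2 ^ l) + 1) * 2 ^ (k - l - 1) := rfl
  rcases Nat.lt_or_ge l j with hlj' | hlj'
  · -- level l < j : the point is outside the interval (lo (l+1), lo (l+1) + 2^(k-l-1))
    obtain ⟨hd', _⟩ := lo_dvd_le k A (l + 1) (by omega)
    have hkl : k - (l + 1) = k - l - 1 := by omega
    obtain ⟨c, hc⟩ : 2 ^ (k - l - 1) ∣ lo k A (l + 1) := by rw [← hkl]; exact hd'
    rw [mul_comm] at hc
    set d := 2 * ((t + 1) - 2 ^ l) + 1 with hdd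
    obtain ⟨hn1, hn2⟩ := lo_nested k A (l + 1) j (by omega) (le_of_lt hj)
    rcases le_or_gt (xval k t) (lo k A (l + 1)) with hle | hgt
    · have hxj : xval k t ≤ L := le_trans hle hn1
      have hxk : xval k t ≤ lo k A k := le_trans hxj hLlek
      simp [hxj, hxk]
    · have hcd : c < d := by
        rw [hxval, hc] at hgt
        exact lt_of_mul_lt_mul_right hgt (Nat.zero_le _)
      have hge : lo k A (l + 1) + 2 ^ (k - l - 1) ≤ xval k t := by
        rw [hxval, hc]
        calc c * 2 ^ (k - l - 1) + 2 ^ (k - l - 1) = (c + 1) * 2 ^ (k - l - 1) := by ring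
          _ ≤ d * 2 ^ (k - l - 1) := Nat.mul_le_mul_right _ hcd
      have hkl1 : (2:ℕ) ^ (k - (l + 1)) = 2 ^ (k - l - 1) := by rw [hkl]
      rw [hkl1] at hn2
      have hp : (0:ℕ) < 2 ^ (k - j) := Nat.pow_pos (by norm_num)
      have hxj : L < xval k t := by omega
      have hxk : lo k A k < xval k t := by omega
      simp [Nat.not_le.mpr hxj, Nat.not_le.mpr hxk]
  · -- level l = j : the point comes before the active point in its level, so x < lo j
    have hlj2 : l = j := by omega
    subst hlj2
    have hm : (t + 1) - 2 ^ l < mj := by omega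
    have hxle : xval k t < L := by
      rw [hxval, ← hq]
      have h2kj : (2:ℕ) ^ (k - l) = 2 * 2 ^ (k - l - 1) := by
        rw [← pow_succ']; congr 1; omega
      calc (2 * ((t + 1) - 2 ^ l) + 1) * 2 ^ (k - l - 1)
          < (2 * mj) * 2 ^ (k - l - 1) :=
            mul_lt_mul_of_pos_right (by omega) (Nat.pow_pos (by norm_num))
        _ = mj * 2 ^ (k - l) := by rw [h2kj]; ring
    have hxj : xval k t ≤ L := le_of_lt hxle
    have hxk : xval k t ≤ lo k A k := le_trans hxj hLlek
    simp [hxj, hxk]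

lemma log_tj (j : ℕ) (hj : j < k) : Nat.log 2 (tj k A j + 1) = j := by
  have hmjlt : lo k A j / 2 ^ (k - j) < 2 ^ j := mj_lt k A j (le_of_lt hj)
  have h2j : (0:ℕ) < 2 ^ j := Nat.pow_pos (by norm_num)
  have h2j1 : (2:ℕ) ^ (j + 1) = 2 * 2 ^ j := by rw [pow_succ']
  have h1 : tj k A j = 2 ^ j - 1 + lo k A j / 2 ^ (k - j) := rfl
  generalize hm : lo k A j / 2 ^ (k - j) = m at h1 hmjlt
  apply Nat.log_eq_of_pow_le_of_lt_pow <;> omega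

lemma xval_tj (j : ℕ) (hj : j < k) : xval k (tj k A j) = lo k A j + 2 ^ (k - j - 1) := by
  obtain ⟨hd, _⟩ := lo_dvd_le k A j (le_of_lt hj)
  have hq : (lo k A j / 2 ^ (k - j)) * 2 ^ (k - j) = lo k A j := Nat.div_mul_cancel hd
  have h2j : (0:ℕ) < 2 ^ j := Nat.pow_pos (by norm_num)
  have hlog := log_tj k A j hj
  show (2 * ((tj k A j + 1) - 2 ^ (Nat.log 2 (tj k A j + 1))) + 1) *
      2 ^ (k - Nat.log 2 (tj k A j + 1) - 1) = _
  rw [hlog]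
  have ht : tj k A j = 2 ^ j - 1 + lo k A j / 2 ^ (k - j) := rfl
  have h1 : (tj k A j + 1) - 2 ^ j = lo k A j / 2 ^ (k - j) := by
    conv_lhs => rw [ht]
    generalize lo k A j / 2 ^ (k - j) = m
    omega
  rw [h1]
  have h2kj : (2:ℕ) ^ (k - j) = 2 * 2 ^ (k - j - 1) := by rw [← pow_succ']; congr 1; omega
  calc (2 * (lo k A j / 2 ^ (k - j)) + 1) * 2 ^ (k - j - 1)
      = (lo k A j / 2 ^ (k - j)) * (2 * 2 ^ (k - j - 1)) + 2 ^ (k - j - 1) := by ring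
    _ = lo k A j + 2 ^ (k - j - 1) := by rw [← h2kj, hq]

lemma label_tj (j : ℕ) (hj : j < k) :
    decide (xval k (tj k A j) ≤ lo k A k) = bbit k A (lo k A j) j := by
  rw [xval_tj k A j hj]
  have hstep := lo_succ k A j
  have hkj : (2:ℕ) ^ (k - 1 - j) = 2 ^ (k - j - 1) := by congr 1; omega
  obtain ⟨hn1, hn2⟩ := lo_nested k A (j + 1) k (by omega) le_rfl
  have hkk : (2:ℕ) ^ (k - k) = 1 := by rw [Nat.sub_self, pow_zero]
  have hkj1 : (2:ℕ) ^ (k - (j + 1)) = 2 ^ (k - j - 1) := by congr 1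
  rw [hkk, hkj1] at hn2
  rw [hkj] at hstep
  cases hb : bbit k A (lo k A j) j
  · rw [hb] at hstep
    simp only [if_neg Bool.false_ne_true, Nat.add_zero] at hstep
    simp only [decide_eq_false_iff_not]
    omega
  · rw [hb, if_pos rfl] at hstep
    simp only [decide_eq_true_eq]
    omega

end DyadicLB

/-- On the class of thresholds `h_i(m) = 1 ↔ m ≤ i` (`0 ≤ i ≤ N-1`, `N = 2^k`) over the
points `1, …, N-1` presented in dyadic order, the adversary can force a mistake at every
dyadic level: `k` mistakes in total, with all chosen labels realizable by some threshold
in the class (labels are generated by an actual threshold `h ∈ H_N`). -/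
theorem dyadic_threshold_lower_bound (k : ℕ) (hk : 1 ≤ k) :
    ∀ A : (Fin (2 ^ k - 1) → ℕ) → List Bool → Bool,
      ∃ h ∈ {h : ℕ → Bool | ∃ i : ℕ, i ≤ 2 ^ k - 1 ∧
              h = fun m : ℕ => decide (m ≤ i)},
        k ≤ mistakes A (dyadicSeq k) h := by
  intro A
  open DyadicLB in
  refine ⟨fun m => decide (m ≤ lo k A k), ⟨lo k A k, ?_, rfl⟩, ?_⟩
  · have h := (lo_dvd_le k A k le_rfl).2
    have h1 : (2:ℕ) ^ (k - k) = 1 := by rw [Nat.sub_self, pow_zero]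
    omega
  · have h2k : (2:ℕ) ^ 1 ≤ 2 ^ k := Nat.pow_le_pow_right (by norm_num) hk
    have htj_lt : ∀ j : Fin k, tj k A j.1 < 2 ^ k - 1 := by
      intro j
      have hmjlt := mj_lt k A j.1 (le_of_lt j.2)
      have hle : (2:ℕ) ^ (j.1 + 1) ≤ 2 ^ k := Nat.pow_le_pow_right (by norm_num) j.2
      have h2j1 : (2:ℕ) ^ (j.1 + 1) = 2 * 2 ^ j.1 := by rw [pow_succ']
      have h2j : (0:ℕ) < 2 ^ j.1 := Nat.pow_pos (by norm_num)
      have ht : tj k A j.1 = 2 ^ j.1 - 1 + lo k A j.1 / 2 ^ (k - j.1) := rfl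
      set m := lo k A j.1 / 2 ^ (k - j.1)
      omega
    set f : Fin k → Fin (2 ^ k - 1) := fun j => ⟨tj k A j.1, htj_lt j⟩ with hf
    have hinj : Set.InjOn f (Finset.univ : Finset (Fin k)) := by
      intro a _ b _ hab
      have h1 : tj k A a.1 = tj k A b.1 := congrArg Fin.val hab
      have h2 : a.1 = b.1 := by
        have ha := log_tj k A a.1 a.2
        rw [h1, log_tj k A b.1 b.2] at ha
        omega
      exact Fin.ext h2
    unfold mistakes
    rw [Finset.filter_congr_decidable]
    refine le_trans (le_of_eq (Finset.card_fin k).symm)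
      (Finset.card_le_card_of_injOn f ?_ hinj)
    intro j _
    refine Finset.mem_filter.mpr ⟨Finset.mem_univ _, ?_⟩
    show A (dyadicSeq k) (List.ofFn fun i : Fin (tj k A j.1) =>
        decide (xval k i.1 ≤ lo k A k)) ≠ decide (xval k (tj k A j.1) ≤ lo k A k)
    rw [label_tj k A j.1 j.2]
    have e1 : (List.ofFn fun i : Fin (tj k A j.1) =>
        decide (xval k i.1 ≤ lo k A k)) =
        List.ofFn fun i : Fin (tj k A j.1) => decide (xval k i.1 ≤ lo k A j.1) := by
      congr 1
      funext i
      exact (prefix_agree k A j.1 j.2 i.1 i.2).symm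
    rw [e1]
    rw [show bbit k A (lo k A j.1) j.1 = ! A (dyadicSeq k)
        (List.ofFn fun i : Fin (tj k A j.1) => decide (xval k i.1 ≤ lo k A j.1)) from rfl]
    exact Ne.symm (Bool.not_ne_self _)
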